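/- A probability measure μ on F_S (with associated i.i.d. function sequence and coalescence relation ∼) is a block measure if and only if its coalescing classes C = {C_1,…,C_ℓ} are almost surely constant; in that case μ is a C-block measure. -/

import Mathlib

open Finset MeasureTheory
open scoped ENNReal

/-- `comps f t = f_t ∘ ⋯ ∘ f_1` (indexed from `0`). -/
def comps {S : Type*} (f : ℕ → S → S) : ℕ → S → S
  | 0 => id
  | t + 1 => f t ∘ comps f t

/-- States `i` and `j` coalesce under the sequence of functions `f`. -/
def Coalesces {S : Type*} (f : ℕ → S → S) (i j : S) : Prop :=
  ∃ t : ℕ, comps f t i = comps f t j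

/-- `μ` is a block measure with blocks the fibres of the surjection `c : S → Fin ℓ`,
for the i.i.d. iteration driven by `F` on the probability space `(Ω, Pr)`:
(a) every function in the support of `μ` permutes the blocks, and
(b) the number of coalescence classes is a.s. `ℓ`. -/
def IsBlockMeasure {S : Type*} {Ω : Type*} [MeasurableSpace Ω] (Pr : Measure Ω)
    (F : ℕ → Ω → S → S) (μ : (S → S) → ℝ) {ℓ : ℕ} (c : S → Fin ℓ) : Prop :=
  Function.Surjective c ∧
  (∀ f : S → S, μ f ≠ 0 → ∃ π : Equiv.Perm (Fin ℓ), ∀ i, c (f i) = π (c i)) ∧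
  (∀ᵐ ω ∂Pr, ∃ g : S → Fin ℓ, Function.Surjective g ∧
      ∀ i j, Coalesces (fun n => F n ω) i j ↔ g i = g j)

lemma comps_congr {S : Type*} {f f' : ℕ → S → S} (t : ℕ) (h : ∀ s < t, f s = f' s) :
    comps f t = comps f' t := by
  induction t with
  | zero => rfl
  | succ t ih =>
    have h1 : f t = f' t := h t (Nat.lt_succ_self t)
    have h2 := ih (fun s hs => h s (hs.trans (Nat.lt_succ_self t)))
    simp [comps, h1, h2]

lemma comps_shift {S : Type*} (f : ℕ → S → S) (t : ℕ) (x : S) :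
    comps f (t + 1) x = comps (fun s => f (s + 1)) t (f 0 x) := by
  induction t with
  | zero => rfl
  | succ t ih =>
    show f (t + 1) (comps f (t + 1) x) = _
    rw [ih]; rfl

def patExt (t : ℕ) {S : Type*} (p : Fin t → S → S) : ℕ → S → S :=
  fun s => if h : s < t then p ⟨s, h⟩ else id

lemma patExt_lt (t : ℕ) {S : Type*} (p : Fin t → S → S) (s : ℕ) (h : s < t) :
    patExt t p s = p ⟨s, h⟩ := dif_pos h

lemma comps_patExt_cons {S : Type*} (t : ℕ) (f : S → S) (q : Fin t → S → S) (x : S) :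
    comps (patExt (t + 1) (Fin.cons f q)) (t + 1) x = comps (patExt t q) t (f x) := by
  rw [comps_shift]
  have h0 : patExt (t + 1) (Fin.cons f q) 0 = f := by
    rw [patExt_lt (t + 1) _ 0 (Nat.succ_pos t)]
    rfl
  rw [h0]
  have hc : comps (fun s => patExt (t + 1) (Fin.cons f q) (s + 1)) t = comps (patExt t q) t := by
    apply comps_congr
    intro s hs
    rw [patExt_lt (t + 1) _ (s + 1) (Nat.succ_lt_succ hs), patExt_lt t q s hs]
    rfl
  rw [hc]


/-- a probability measure `μ` on `F_S` is a block measure if and only if its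
coalescing classes are almost surely constant; and if the coalescing classes are a.s. the
fibres of a surjection `g`, then `μ` is a `g`-block measure. -/
theorem blockMeasure_iff_classes_constant {S : Type*} [Fintype S] [DecidableEq S] [Nonempty S]
    {Ω : Type*} [MeasurableSpace Ω] (Pr : Measure Ω) [IsProbabilityMeasure Pr]
    (μ : (S → S) → ℝ) (hμnn : ∀ g, 0 ≤ μ g) (hμsum : ∑ g, μ g = 1)
    (F : ℕ → Ω → S → S)
    (hiid : ∀ (T : Finset ℕ) (g : ℕ → S → S),
      Pr {ω | ∀ t ∈ T, F t ω = g t} = ∏ t ∈ T, ENNReal.ofReal (μ (g t))) :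
    ((∃ (ℓ : ℕ) (c : S → Fin ℓ), IsBlockMeasure Pr F μ c) ↔
      (∃ (k : ℕ) (g : S → Fin k), Function.Surjective g ∧
        ∀ᵐ ω ∂Pr, ∀ i j, Coalesces (fun n => F n ω) i j ↔ g i = g j)) ∧
    ∀ (k : ℕ) (g : S → Fin k), Function.Surjective g →
      (∀ᵐ ω ∂Pr, ∀ i j, Coalesces (fun n => F n ω) i j ↔ g i = g j) →
      IsBlockMeasure Pr F μ g := by
  classical
  -- total mass of μ as ENNReal weights
  have w_sum : ∑ h : S → S, ENNReal.ofReal (μ h) = 1 := by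
    rw [← ENNReal.ofReal_sum_of_nonneg (fun h _ => hμnn h), hμsum, ENNReal.ofReal_one]
  have single : ∀ (t : ℕ) (h : S → S), Pr {ω | F t ω = h} = ENNReal.ofReal (μ h) := by
    intro t h
    have h1 := hiid {t} (fun _ => h)
    simpa using h1
  -- probability of a cylinder pattern
  have hW : ∀ (t : ℕ) (p : Fin t → S → S),
      Pr {ω | ∀ s : Fin t, F (s : ℕ) ω = p s} = ∏ s, ENNReal.ofReal (μ (p s)) := by
    intro t p
    have h := hiid (Finset.range t) (patExt t p)
    have hset : {ω | ∀ s ∈ Finset.range t, F s ω = patExt t p s}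
        = {ω | ∀ s : Fin t, F (s : ℕ) ω = p s} := by
      ext ω
      constructor
      · intro hω s
        have := hω s (Finset.mem_range.mpr s.isLt)
        rwa [patExt_lt t p s s.isLt, Fin.eta] at this
      · intro hω s hs
        rw [patExt_lt t p s (Finset.mem_range.mp hs)]
        exact hω ⟨s, Finset.mem_range.mp hs⟩
    have hprod : ∏ s ∈ Finset.range t, ENNReal.ofReal (μ (patExt t p s))
        = ∏ s : Fin t, ENNReal.ofReal (μ (p s)) := by
      rw [← Fin.prod_univ_eq_prod_range (fun s => ENNReal.ofReal (μ (patExt t p s))) t]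
      apply Finset.prod_congr rfl
      intro s _
      rw [patExt_lt t p s s.isLt, Fin.eta]
    rw [hset] at h
    rw [h, hprod]
  -- upper bound for window events
  have hub : ∀ (t : ℕ) (P : Finset (Fin t → S → S)),
      Pr {ω | (fun s : Fin t => F (s : ℕ) ω) ∈ P} ≤ ∑ p ∈ P, ∏ s, ENNReal.ofReal (μ (p s)) := by
    intro t P
    have hsub : {ω | (fun s : Fin t => F (s : ℕ) ω) ∈ P}
        ⊆ ⋃ p ∈ P, {ω | ∀ s : Fin t, F (s : ℕ) ω = p s} := by
      intro ω hω
      exact Set.mem_biUnion hω (fun s => rfl)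
    calc Pr {ω | (fun s : Fin t => F (s : ℕ) ω) ∈ P}
        ≤ Pr (⋃ p ∈ P, {ω | ∀ s : Fin t, F (s : ℕ) ω = p s}) := measure_mono hsub
      _ ≤ ∑ p ∈ P, Pr {ω | ∀ s : Fin t, F (s : ℕ) ω = p s} := measure_biUnion_finset_le _ _
      _ = ∑ p ∈ P, ∏ s, ENNReal.ofReal (μ (p s)) :=
          Finset.sum_congr rfl (fun p _ => hW t p)
  have htot : ∀ t : ℕ, ∑ p : Fin t → S → S, ∏ s, ENNReal.ofReal (μ (p s)) = 1 := by
    intro t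
    calc ∑ p : Fin t → S → S, ∏ s, ENNReal.ofReal (μ (p s))
        = ∑ p ∈ Fintype.piFinset (fun _ : Fin t => (Finset.univ : Finset (S → S))),
            ∏ s, ENNReal.ofReal (μ (p s)) := by rw [Fintype.piFinset_univ]
      _ = ∏ _s : Fin t, ∑ h : S → S, ENNReal.ofReal (μ h) := (Finset.prod_univ_sum (fun _ : Fin t => (Finset.univ : Finset (S → S)))
            (fun _ h => ENNReal.ofReal (μ h))).symm
      _ = 1 := by rw [w_sum]; simp
  have window : ∀ (t : ℕ) (P : Finset (Fin t → S → S)),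
      Pr {ω | (fun s : Fin t => F (s : ℕ) ω) ∈ P} = ∑ p ∈ P, ∏ s, ENNReal.ofReal (μ (p s)) := by
    intro t P
    refine le_antisymm (hub t P) ?_
    have hcompl : Pr {ω | (fun s : Fin t => F (s : ℕ) ω) ∈ P}ᶜ
        ≤ ∑ p ∈ Pᶜ, ∏ s, ENNReal.ofReal (μ (p s)) := by
      have hc : {ω | (fun s : Fin t => F (s : ℕ) ω) ∈ P}ᶜ
          = {ω | (fun s : Fin t => F (s : ℕ) ω) ∈ Pᶜ} := by
        ext ω; simp
      rw [hc]
      exact hub t Pᶜ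
    have hsplit : ∑ p ∈ P, ∏ s, ENNReal.ofReal (μ (p s))
        + ∑ p ∈ Pᶜ, ∏ s, ENNReal.ofReal (μ (p s)) = 1 := by
      rw [Finset.sum_add_sum_compl]
      exact htot t
    have hone : (1 : ℝ≥0∞) ≤ Pr {ω | (fun s : Fin t => F (s : ℕ) ω) ∈ P}
        + ∑ p ∈ Pᶜ, ∏ s, ENNReal.ofReal (μ (p s)) := by
      calc (1 : ℝ≥0∞) = Pr Set.univ := measure_univ.symm
        _ = Pr ({ω | (fun s : Fin t => F (s : ℕ) ω) ∈ P}
              ∪ {ω | (fun s : Fin t => F (s : ℕ) ω) ∈ P}ᶜ) := by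
            rw [Set.union_compl_self]
        _ ≤ Pr {ω | (fun s : Fin t => F (s : ℕ) ω) ∈ P}
              + Pr {ω | (fun s : Fin t => F (s : ℕ) ω) ∈ P}ᶜ := measure_union_le _ _
        _ ≤ _ := by exact add_le_add (le_refl _) hcompl
    have hbne : ∑ p ∈ Pᶜ, ∏ s, ENNReal.ofReal (μ (p s)) ≠ ⊤ := by
      intro hcon
      rw [hcon] at hsplit
      simp at hsplit
    rw [← hsplit] at hone
    exact (ENNReal.add_le_add_iff_right hbne).mp hone
  -- probability of coalescence-by-time-t events
  have probComps : ∀ (t : ℕ) (i j : S),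
      Pr {ω | comps (fun n => F n ω) t i = comps (fun n => F n ω) t j}
        = ∑ p ∈ Finset.univ.filter
            (fun p : Fin t → S → S => comps (patExt t p) t i = comps (patExt t p) t j),
            ∏ s, ENNReal.ofReal (μ (p s)) := by
    intro t i j
    rw [← window t]
    congr 1
    ext ω
    simp only [Set.mem_setOf_eq, Finset.mem_filter, Finset.mem_univ, true_and]
    have hc : comps (patExt t (fun s : Fin t => F (s : ℕ) ω)) t = comps (fun n => F n ω) t := by
      apply comps_congr
      intro s hs
      rw [patExt_lt t _ s hs]
    rw [hc]
  have probKey : ∀ (f : S → S) (t : ℕ) (i j : S),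
      Pr {ω | F 0 ω = f ∧ comps (fun n => F n ω) (t + 1) i = comps (fun n => F n ω) (t + 1) j}
        = ENNReal.ofReal (μ f)
            * Pr {ω | comps (fun n => F n ω) t (f i) = comps (fun n => F n ω) t (f j)} := by
    intro f t i j
    rw [probComps t (f i) (f j)]
    have hL : {ω | F 0 ω = f ∧ comps (fun n => F n ω) (t + 1) i = comps (fun n => F n ω) (t + 1) j}
        = {ω | (fun s : Fin (t + 1) => F (s : ℕ) ω) ∈ Finset.univ.filter
            (fun p : Fin (t + 1) → S → S => p 0 = f ∧
              comps (patExt (t + 1) p) (t + 1) i = comps (patExt (t + 1) p) (t + 1) j)} := by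
      ext ω
      simp only [Set.mem_setOf_eq, Finset.mem_filter, Finset.mem_univ, true_and]
      have hc : comps (patExt (t + 1) (fun s : Fin (t + 1) => F (s : ℕ) ω)) (t + 1)
          = comps (fun n => F n ω) (t + 1) := by
        apply comps_congr
        intro s hs
        rw [patExt_lt (t + 1) _ s hs]
      rw [hc]
      exact Iff.rfl
    rw [hL, window, Finset.mul_sum]
    refine Finset.sum_nbij' (fun p => Fin.tail p) (fun q => Fin.cons f q) ?_ ?_ ?_ ?_ ?_
    · intro p hp
      simp only [Finset.mem_filter, Finset.mem_univ, true_and] at hp ⊢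
      obtain ⟨hp0, hpc⟩ := hp
      have hp' : p = Fin.cons f (Fin.tail p) := by
        rw [← hp0]
        exact (Fin.cons_self_tail p).symm
      rw [hp', comps_patExt_cons, comps_patExt_cons] at hpc
      exact hpc
    · intro q hq
      simp only [Finset.mem_filter, Finset.mem_univ, true_and] at hq ⊢
      refine ⟨rfl, ?_⟩
      rw [comps_patExt_cons, comps_patExt_cons]
      exact hq
    · intro p hp
      simp only [Finset.mem_filter, Finset.mem_univ, true_and] at hp
      rw [← hp.1]
      exact Fin.cons_self_tail p
    · intro q _
      exact funext fun i => rfl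
    · intro p hp
      simp only [Finset.mem_filter, Finset.mem_univ, true_and] at hp
      rw [Fin.prod_univ_succ, hp.1]
      rfl
  -- main part: a.s. constant classes imply block measure
  have main : ∀ (k : ℕ) (g : S → Fin k), Function.Surjective g →
      (∀ᵐ ω ∂Pr, ∀ i j, Coalesces (fun n => F n ω) i j ↔ g i = g j) →
      IsBlockMeasure Pr F μ g := by
    intro k g hsurj hae
    have hbad : Pr {ω | ¬ ∀ i j, Coalesces (fun n => F n ω) i j ↔ g i = g j} = 0 :=
      ae_iff.mp hae
    have hCoalZero : ∀ i j, g i ≠ g j → Pr {ω | Coalesces (fun n => F n ω) i j} = 0 := by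
      intro i j hne
      refine measure_mono_null ?_ hbad
      intro ω hω hall
      exact hne ((hall i j).mp hω)
    have hNot : ∀ i j, g i = g j → Pr {ω | ¬ Coalesces (fun n => F n ω) i j} = 0 := by
      intro i j he
      refine measure_mono_null ?_ hbad
      intro ω hω hall
      exact hω ((hall i j).mpr he)
    have hCompsZero : ∀ i j, g i ≠ g j → ∀ t,
        Pr {ω | comps (fun n => F n ω) t i = comps (fun n => F n ω) t j} = 0 := by
      intro i j hne t
      have hsub : {ω | comps (fun n => F n ω) t i = comps (fun n => F n ω) t j}
          ⊆ {ω | Coalesces (fun n => F n ω) i j} := fun ω hω => ⟨t, hω⟩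
      exact measure_mono_null hsub (hCoalZero i j hne)
    have hCoalOne : ∀ i j, g i = g j →
        (1 : ℝ≥0∞) ≤ Pr {ω | Coalesces (fun n => F n ω) i j} := by
      intro i j he
      have hu : (Set.univ : Set Ω) ⊆ {ω | Coalesces (fun n => F n ω) i j}
          ∪ {ω | ¬ Coalesces (fun n => F n ω) i j} := fun ω _ => em _
      calc (1 : ℝ≥0∞) = Pr Set.univ := measure_univ.symm
        _ ≤ Pr ({ω | Coalesces (fun n => F n ω) i j}
              ∪ {ω | ¬ Coalesces (fun n => F n ω) i j}) := measure_mono hu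
        _ ≤ Pr {ω | Coalesces (fun n => F n ω) i j}
              + Pr {ω | ¬ Coalesces (fun n => F n ω) i j} := measure_union_le _ _
        _ = Pr {ω | Coalesces (fun n => F n ω) i j} := by rw [hNot i j he, add_zero]
    refine ⟨hsurj, ?_, ?_⟩
    · intro f hf
      have hwf : ENNReal.ofReal (μ f) ≠ 0 := by
        rw [Ne, ENNReal.ofReal_eq_zero, not_le]
        exact lt_of_le_of_ne (hμnn f) (Ne.symm hf)
      have claim1 : ∀ i j, g i = g j → g (f i) = g (f j) := by
        intro i j hgij
        by_contra hne
        have hij : i ≠ j := fun h => hne (by rw [h])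
        have hza := hCompsZero (f i) (f j) hne
        have hz2 : ∀ t, Pr {ω | F 0 ω = f ∧
            comps (fun n => F n ω) t i = comps (fun n => F n ω) t j} = 0 := by
          intro t
          match t with
          | 0 =>
            have he : {ω | F 0 ω = f ∧
                comps (fun n => F n ω) 0 i = comps (fun n => F n ω) 0 j} = (∅ : Set Ω) := by
              ext ω
              simp only [Set.mem_setOf_eq, Set.mem_empty_iff_false, iff_false, not_and]
              intro _
              exact fun hc => hij hc
            rw [he, measure_empty]
          | Nat.succ t =>
            rw [probKey f t i j, hza t, mul_zero]
        have hU : Pr {ω | F 0 ω = f ∧ Coalesces (fun n => F n ω) i j} = 0 := by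
          have hsub : {ω | F 0 ω = f ∧ Coalesces (fun n => F n ω) i j}
              ⊆ ⋃ t, {ω | F 0 ω = f ∧
                comps (fun n => F n ω) t i = comps (fun n => F n ω) t j} := by
            rintro ω ⟨h0, t, ht⟩
            exact Set.mem_iUnion.mpr ⟨t, h0, ht⟩
          exact measure_mono_null hsub (measure_iUnion_null hz2)
        have hzero : Pr {ω | F 0 ω = f} = 0 := by
          refine le_antisymm ?_ zero_le
          have hsub : {ω | F 0 ω = f} ⊆ {ω | F 0 ω = f ∧ Coalesces (fun n => F n ω) i j}
              ∪ {ω | ¬ Coalesces (fun n => F n ω) i j} := by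
            intro ω h0
            by_cases hc : Coalesces (fun n => F n ω) i j
            · exact Or.inl ⟨h0, hc⟩
            · exact Or.inr hc
          calc Pr {ω | F 0 ω = f}
              ≤ Pr ({ω | F 0 ω = f ∧ Coalesces (fun n => F n ω) i j}
                  ∪ {ω | ¬ Coalesces (fun n => F n ω) i j}) := measure_mono hsub
            _ ≤ Pr {ω | F 0 ω = f ∧ Coalesces (fun n => F n ω) i j}
                  + Pr {ω | ¬ Coalesces (fun n => F n ω) i j} := measure_union_le _ _
            _ = 0 := by rw [hU, hNot i j hgij, add_zero]
        rw [single 0 f] at hzero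
        exact hwf hzero
      have claim2 : ∀ i j, g (f i) = g (f j) → g i = g j := by
        intro i j h2
        by_contra hne
        have hz : ∀ t, Pr {ω | comps (fun n => F n ω) t (f i)
            = comps (fun n => F n ω) t (f j)} = 0 := by
          intro t
          have h0 : Pr {ω | F 0 ω = f ∧
              comps (fun n => F n ω) (t + 1) i = comps (fun n => F n ω) (t + 1) j} = 0 :=
            measure_mono_null (fun ω hω => hω.2) (hCompsZero i j hne (t + 1))
          rw [probKey f t i j] at h0
          rcases mul_eq_zero.mp h0 with h | h
          · exact absurd h hwf
          · exact h
        have hone := hCoalOne (f i) (f j) h2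
        have hzz : Pr {ω | Coalesces (fun n => F n ω) (f i) (f j)} = 0 := by
          have hsub : {ω | Coalesces (fun n => F n ω) (f i) (f j)}
              ⊆ ⋃ t, {ω | comps (fun n => F n ω) t (f i)
                = comps (fun n => F n ω) t (f j)} := by
            rintro ω ⟨t, ht⟩
            exact Set.mem_iUnion.mpr ⟨t, ht⟩
          exact measure_mono_null hsub (measure_iUnion_null hz)
        rw [hzz] at hone
        simp at hone
      have hinj : Function.Injective (fun a : Fin k => g (f (Function.surjInv hsurj a))) := by
        intro a b hab
        have h2 := claim2 _ _ hab
        rwa [Function.surjInv_eq hsurj a, Function.surjInv_eq hsurj b] at h2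
      refine ⟨Equiv.ofBijective _ (Finite.injective_iff_bijective.mp hinj), fun i => ?_⟩
      show g (f i) = g (f (Function.surjInv hsurj (g i)))
      exact claim1 i _ (Function.surjInv_eq hsurj (g i)).symm
    · filter_upwards [hae] with ω hω
      exact ⟨g, hsurj, hω⟩
  refine ⟨⟨?_, ?_⟩, main⟩
  · rintro ⟨ℓ, c, hcs, hperm, hb⟩
    refine ⟨ℓ, c, hcs, ?_⟩
    have hsupp : ∀ᵐ ω ∂Pr, ∀ t, μ (F t ω) ≠ 0 := by
      rw [ae_all_iff]
      intro t
      rw [ae_iff]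
      have hsub : {ω | ¬ μ (F t ω) ≠ 0}
          ⊆ ⋃ h : {h : S → S // μ h = 0}, {ω | F t ω = h.1} :=
        fun ω hω => Set.mem_iUnion.mpr ⟨⟨F t ω, not_not.mp hω⟩, rfl⟩
      refine measure_mono_null hsub (measure_iUnion_null fun h => ?_)
      rw [single t h.1, h.2, ENNReal.ofReal_zero]
    filter_upwards [hsupp, hb] with ω h1 h2
    obtain ⟨g', hg's, hg'⟩ := h2
    have hdir : ∀ i j, Coalesces (fun n => F n ω) i j → c i = c j := by
      rintro i j ⟨t, ht⟩
      suffices h : ∃ e : Equiv.Perm (Fin ℓ), ∀ x, c (comps (fun n => F n ω) t x) = e (c x) by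
        obtain ⟨e, he⟩ := h
        exact e.injective (by rw [← he i, ← he j, ht])
      clear ht
      induction t with
      | zero => exact ⟨Equiv.refl _, fun x => rfl⟩
      | succ t ih =>
        obtain ⟨e, he⟩ := ih
        obtain ⟨π, hπ⟩ := hperm (F t ω) (h1 t)
        refine ⟨e.trans π, fun x => ?_⟩
        show c (F t ω (comps (fun n => F n ω) t x)) = π (e (c x))
        rw [hπ, he]
    have hfac : ∀ i, c i = c (Function.surjInv hg's (g' i)) := by
      intro i
      exact (hdir _ _ ((hg' _ i).mpr (Function.surjInv_eq hg's (g' i)))).symm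
    have hinj : Function.Injective (fun a : Fin ℓ => c (Function.surjInv hg's a)) := by
      have hsurj0 : Function.Surjective (fun a : Fin ℓ => c (Function.surjInv hg's a)) := by
        intro b
        obtain ⟨i, hi⟩ := hcs b
        refine ⟨g' i, ?_⟩
        show c (Function.surjInv hg's (g' i)) = b
        rw [← hfac i, hi]
      exact Finite.injective_iff_surjective.mpr hsurj0
    intro i j
    constructor
    · exact hdir i j
    · intro hcij
      refine (hg' i j).mpr (hinj ?_)
      show c (Function.surjInv hg's (g' i)) = c (Function.surjInv hg's (g' j))
      rw [← hfac i, ← hfac j, hcij]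
  · rintro ⟨k, g, hs, hae⟩
    exact ⟨k, g, main k g hs hae⟩
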